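/- Let p be an odd prime, let Ω be a finite set with |Ω| = n > 1, and let G be a non-trivial subgroup of the symmetric group Sym(Ω) such that G = O^{p'}(G). Then there exists a partition Ω = Δ₁ ⊔ Δ₂ ⊔ Δ₃ into pairwise disjoint subsets with Δ₁ and Δ₂ non-empty (Δ₃ possibly empty) such that the index in G of the intersection Stab_G(Δ₁) ∩ Stab_G(Δ₂) ∩ Stab_G(Δ₃) of the three setwise stabilizers is divisible by p. -/

import Mathlib

open Pointwise

/-- Theorem 2.1 (first part): if `p` is an odd prime, `Ω` a finite set with more than one
element, and `G` a non-trivial subgroup of `Sym(Ω)` with `G = O^{p'}(G)`, then there is a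
partition `Ω = Δ₁ ⊔ Δ₂ ⊔ Δ₃` with `Δ₁, Δ₂` non-empty such that `p` divides the index in `G`
of the intersection of the three setwise stabilizers. -/
theorem stmt_0 {Ω : Type*} [Fintype Ω] (p : ℕ) (hp : p.Prime) (hodd : Odd p)
    (hΩ : 1 < Fintype.card Ω)
    (G : Subgroup (Equiv.Perm Ω)) (hG : G ≠ ⊥)
    (hOp : ∀ N : Subgroup G, N.Normal → Nat.Coprime N.index p → N = ⊤) :
    ∃ Δ₁ Δ₂ Δ₃ : Set Ω,
      Δ₁.Nonempty ∧ Δ₂.Nonempty ∧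
      Disjoint Δ₁ Δ₂ ∧ Disjoint Δ₁ Δ₃ ∧ Disjoint Δ₂ Δ₃ ∧
      Δ₁ ∪ Δ₂ ∪ Δ₃ = (Set.univ : Set Ω) ∧
      p ∣ (MulAction.stabilizer G Δ₁ ⊓ MulAction.stabilizer G Δ₂ ⊓
            MulAction.stabilizer G Δ₃).index := by
  classical
  haveI : Fact p.Prime := ⟨hp⟩
  by_contra hcon
  push_neg at hcon
  -- Step 1 : `p` divides the order of `G`.
  have hpG : p ∣ Nat.card G := by
    by_contra hnd
    have hcop : Nat.Coprime (⊥ : Subgroup G).index p := by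
      rw [Subgroup.index_bot]
      exact Nat.Coprime.symm ((Nat.Prime.coprime_iff_not_dvd hp).mpr hnd)
    have hbot : (⊥ : Subgroup G) = ⊤ := hOp ⊥ inferInstance hcop
    apply hG
    rw [eq_bot_iff]
    intro x hx
    have hxmem : (⟨x, hx⟩ : G) ∈ (⊥ : Subgroup G) := by
      rw [hbot]; exact Subgroup.mem_top _
    rw [Subgroup.mem_bot] at hxmem
    have : x = (1 : Equiv.Perm Ω) := congrArg Subtype.val hxmem
    simpa [Subgroup.mem_bot] using this
  -- Key descent: assuming `hcon`, by induction on `n` there is no set `Δ` of size at most `n`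
  -- invariant under a `p`-element of `G` acting non-trivially on it.
  have key : ∀ (n : ℕ) (Δ : Set Ω), Δ.ncard ≤ n →
      ∀ g : G, orderOf g = p → (∀ x ∈ Δ, g • x ∈ Δ) →
      ∀ x₀ ∈ Δ, g • x₀ ≠ x₀ → False := by
    intro n
    induction n with
    | zero =>
      intro Δ hΔ g _ _ x₀ hx₀ _
      have hΔ0 : Δ.ncard = 0 := Nat.le_zero.mp hΔ
      rw [Set.ncard_eq_zero Δ.toFinite] at hΔ0
      rw [hΔ0] at hx₀
      exact absurd hx₀ (Set.notMem_empty _)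
    | succ n ih =>
      intro Δ hΔcard g hgord hginv x₀ hx₀ hgx₀
      have hgx₀mem : g • x₀ ∈ Δ := hginv x₀ hx₀
      set Δ₁ : Set Ω := {x₀} with hΔ₁def
      set Δ₂ : Set Ω := Δ \ {x₀} with hΔ₂def
      set Δ₃ : Set Ω := Δᶜ with hΔ₃def
      have h1sub : Δ₁ ⊆ Δ := by
        intro y hy; rw [hΔ₁def, Set.mem_singleton_iff] at hy; rw [hy]; exact hx₀
      have h2ne : Δ₂.Nonempty := ⟨g • x₀, hgx₀mem, by simpa using hgx₀⟩
      have hd12 : Disjoint Δ₁ Δ₂ := by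
        rw [Set.disjoint_left]
        intro a ha ha2
        rw [hΔ₁def, Set.mem_singleton_iff] at ha
        exact ha2.2 (by simpa using ha)
      have hd13 : Disjoint Δ₁ Δ₃ := by
        rw [Set.disjoint_left]
        intro a ha ha3
        rw [hΔ₁def, Set.mem_singleton_iff] at ha
        exact ha3 (ha ▸ hx₀)
      have hd23 : Disjoint Δ₂ Δ₃ := by
        rw [Set.disjoint_left]
        intro a ha ha3
        exact ha3 ha.1
      have hunion : Δ₁ ∪ Δ₂ ∪ Δ₃ = (Set.univ : Set Ω) := by
        rw [hΔ₁def, hΔ₂def, hΔ₃def, Set.union_diff_cancel h1sub, Set.union_compl_self]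
      set H : Subgroup G := MulAction.stabilizer G Δ₁ ⊓ MulAction.stabilizer G Δ₂ ⊓
          MulAction.stabilizer G Δ₃ with hHdef
      have hnd : ¬ p ∣ H.index := hcon Δ₁ Δ₂ Δ₃ ⟨x₀, rfl⟩ h2ne hd12 hd13 hd23 hunion
      -- find a Sylow `p`-subgroup of `G` inside `H`
      obtain ⟨S₀⟩ : Nonempty (Sylow p G) := inferInstance
      have hcardQ : ¬ p ∣ Nat.card (G ⧸ H) := by
        rwa [← Subgroup.index_eq_card]
      obtain ⟨q, hq⟩ := (S₀.isPGroup').nonempty_fixed_point_of_prime_not_dvd_card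
        (G ⧸ H) hcardQ
      obtain ⟨y, rfl⟩ := QuotientGroup.mk_surjective q
      have hSH : ∀ s : G, s ∈ S₀ → y⁻¹ * s * y ∈ H := by
        intro s hs
        have hfix := hq ⟨s⁻¹, inv_mem hs⟩
        have hsmul : (⟨s⁻¹, inv_mem hs⟩ : (S₀ : Subgroup G)) • (QuotientGroup.mk y : G ⧸ H)
            = QuotientGroup.mk (s⁻¹ * y) := by
          show (s⁻¹ : G) • (QuotientGroup.mk y : G ⧸ H) = _
          exact MulAction.Quotient.smul_mk H s⁻¹ y
        rw [hsmul] at hfix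
        have := QuotientGroup.eq.mp hfix
        simpa [mul_assoc] using this
      set S : Sylow p G := y⁻¹ • S₀ with hSdef
      have hSle : (S : Subgroup G) ≤ H := by
        intro x hx
        rw [hSdef, Sylow.coe_subgroup_smul, Subgroup.mem_smul_pointwise_iff_exists] at hx
        obtain ⟨s, hs, rfl⟩ := hx
        have hcj : (MulAut.conj y⁻¹) • s = y⁻¹ * s * y := by
          simp [MulAut.smul_def, MulAut.conj_apply]
        rw [hcj]
        exact hSH s hs
      -- `H` is contained in the setwise stabilizer of `Δ`
      set L : Subgroup G := MulAction.stabilizer G Δ with hLdef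
      have hsplit : Δ = Δ₁ ∪ Δ₂ := by
        rw [hΔ₁def, hΔ₂def, Set.union_diff_cancel h1sub]
      have hHL : H ≤ L := by
        intro h hh
        rw [hHdef, Subgroup.mem_inf, Subgroup.mem_inf] at hh
        obtain ⟨⟨h1, h2⟩, _⟩ := hh
        have e1 : h • Δ₁ = Δ₁ := h1
        have e2 : h • Δ₂ = Δ₂ := h2
        show h • Δ = Δ
        rw [hsplit, Set.smul_set_union, e1, e2]
      -- `g` stabilizes `Δ`
      have hgL : g ∈ L := by
        have hsub : g • Δ ⊆ Δ := by
          rintro _ ⟨x, hxm, rfl⟩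
          exact hginv x hxm
        have hcard : Δ.ncard ≤ (g • Δ).ncard := by
          have : (g • Δ).ncard = Δ.ncard := by
            rw [← Set.image_smul]
            exact Set.ncard_image_of_injective Δ (MulAction.injective g)
          exact this.ge
        exact Set.eq_of_subset_of_ncard_le hsub hcard Δ.toFinite
      -- conjugate `g` into `S` by an element of `L`
      have hSleL : (S : Subgroup G) ≤ L := hSle.trans hHL
      set T : Sylow p L := S.subtype hSleL with hTdef
      set g' : L := ⟨g, hgL⟩ with hg'def
      have hordg' : orderOf g' = p := by
        have hinj := orderOf_injective L.subtype L.subtype_injective g'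
        rw [← hgord, ← hinj]
        rfl
      have hg'p : IsPGroup p (Subgroup.zpowers g') :=
        IsPGroup.of_card (by rw [Nat.card_zpowers, hordg', pow_one])
      obtain ⟨T', hT'⟩ := hg'p.exists_le_sylow
      haveI : Finite (Sylow p L) :=
        Finite.of_injective (fun P : Sylow p L => ((P : Subgroup L) : Set L))
          (fun P Q h => Sylow.ext (SetLike.coe_injective h))
      obtain ⟨c, hc⟩ := MulAction.exists_smul_eq (L : Type _) T T'
      have hg'T' : g' ∈ (T' : Subgroup L) := hT' (Subgroup.mem_zpowers g')
      rw [← hc, Sylow.coe_subgroup_smul, Subgroup.mem_pointwise_smul_iff_inv_smul_mem] at hg'T'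
      set h' : L := c⁻¹ * g' * c with hh'def
      have hh'T : h' ∈ (T : Subgroup L) := by
        have hcj : (MulAut.conj c)⁻¹ • g' = c⁻¹ * g' * c := by
          simp [MulAut.smul_def, MulAut.conj_apply, mul_assoc]
        rwa [hcj] at hg'T'
      have hh'S : (h' : G) ∈ (S : Subgroup G) := by
        rw [hTdef, Sylow.coe_subtype, Subgroup.mem_subgroupOf] at hh'T
        exact hh'T
      have hh'H : (h' : G) ∈ H := hSle hh'S
      set d : G := (c : G) with hddef
      set h : G := (h' : G) with hhdef
      have hh'eq : h = d⁻¹ * g * d := by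
        rw [hhdef, hh'def]
        rfl
      -- properties of `h`
      have hordh : orderOf h = p := by
        have e : h = (MulAut.conj d⁻¹) g := by
          rw [hh'eq, MulAut.conj_apply, inv_inv]
        rw [e]
        exact (orderOf_injective (MulAut.conj d⁻¹).toMonoidHom
          (MulAut.conj d⁻¹).injective g).trans hgord
      obtain ⟨⟨hst1, hst2⟩, _⟩ :
          (h ∈ MulAction.stabilizer G Δ₁ ∧ h ∈ MulAction.stabilizer G Δ₂) ∧
            h ∈ MulAction.stabilizer G Δ₃ := by
        have := hh'H
        rw [hHdef, Subgroup.mem_inf, Subgroup.mem_inf] at this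
        exact this
      have hfixx₀ : h • x₀ = x₀ := by
        have e1 : h • Δ₁ = Δ₁ := hst1
        rw [hΔ₁def, Set.smul_set_singleton] at e1
        exact Set.singleton_eq_singleton_iff.mp e1
      have hinv2 : ∀ x ∈ Δ₂, h • x ∈ Δ₂ := by
        intro x hx
        have e2 : h • Δ₂ = Δ₂ := hst2
        rw [← e2]
        exact Set.smul_mem_smul_set hx
      set z₀ : Ω := d⁻¹ • x₀ with hz₀def
      have hz₀Δ : z₀ ∈ Δ := by
        have hdinv : d⁻¹ ∈ L := inv_mem c.2
        have : d⁻¹ • Δ = Δ := hdinv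
        rw [← this]
        exact Set.smul_mem_smul_set hx₀
      have hmoved : h • z₀ ≠ z₀ := by
        have e : h • z₀ = d⁻¹ • (g • x₀) := by
          rw [hz₀def, hh'eq, smul_smul, smul_smul]
          congr 1
          group
        rw [e, hz₀def]
        intro heq
        exact hgx₀ (smul_left_cancel d⁻¹ heq)
      have hz₀ne : z₀ ≠ x₀ := by
        intro heq
        apply hmoved
        rw [heq, hfixx₀]
      have hz₀mem : z₀ ∈ Δ₂ := ⟨hz₀Δ, by simpa using hz₀ne⟩
      have hcard2 : Δ₂.ncard ≤ n := by
        have hlt : (Δ \ {x₀}).ncard < Δ.ncard :=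
          Set.ncard_diff_singleton_lt_of_mem hx₀ Δ.toFinite
        rw [← hΔ₂def] at hlt
        omega
      exact ih Δ₂ hcard2 h hordh hinv2 z₀ hz₀mem hmoved
  -- apply the descent to the whole of `Ω`, using Cauchy's theorem
  haveI : Fintype G := Fintype.ofFinite _
  have hpG' : p ∣ Fintype.card G := by
    rwa [Nat.card_eq_fintype_card] at hpG
  obtain ⟨g, hgord⟩ := exists_prime_orderOf_dvd_card p hpG'
  have hg1 : g ≠ 1 := by
    intro h1
    rw [h1, orderOf_one] at hgord
    exact hp.one_lt.ne' hgord.symm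
  have hmove : ∃ x : Ω, g • x ≠ x := by
    by_contra hall
    push_neg at hall
    apply hg1
    apply Subtype.ext
    apply Equiv.ext
    intro x
    have := hall x
    simpa [Subgroup.smul_def, Equiv.Perm.smul_def] using this
  obtain ⟨x₀, hx₀⟩ := hmove
  exact key (Set.univ : Set Ω).ncard Set.univ le_rfl g hgord
    (fun x _ => Set.mem_univ _) x₀ (Set.mem_univ x₀) hx₀
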